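/- arXiv:1208.4264 — 5 statements merged into one kernel-verified Lean document; each statement's English description precedes it below -/
import Mathlib

section
/- Let θ, a, b, ρ ∈ ℝ and let I ⊆ ℝ be an open interval. Suppose α, β, γ, μ, ν, φ : I → ℝ are differentiable and satisfy on I the system: α̇ = 4θα² - 2aα - ρ, β̇ = 4θαβ - aβ, γ̇ = θβ², μ̇ = 4θαμ - aμ - 2bα, ν̇ = 2θβμ - bβ, φ̇ = φ·(θμ² + 2θα - bμ). Then for every x₀ ∈ ℝ, the function P(t, x) = φ(t)·exp(α(t)x² + β(t)x·x₀ + γ(t)x₀² + μ(t)x + ν(t)x₀) satisfies the heat equation ∂ₜP(t,x) = θ·∂ₓ²P(t,x) - (ax + b)·∂ₓP(t,x) - ρx²·P(t,x) for all t ∈ I and x ∈ ℝ. -/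
/-- If the coefficients `α, β, γ, μ, ν, φ` of the Gaussian ansatz satisfy the ODE
system `α̇ = 4θα² - 2aα - ρ`, `β̇ = 4θαβ - aβ`, `γ̇ = θβ²`, `μ̇ = 4θαμ - aμ - 2bα`,
`ν̇ = 2θβμ - bβ`, `φ̇ = φ(θμ² + 2θα - bμ)` on an open interval `I`, then
`P(t,x) = φ(t)exp(α(t)x² + β(t)xx₀ + γ(t)x₀² + μ(t)x + ν(t)x₀)` satisfies
`∂ₜP = θ∂ₓ²P - (ax+b)∂ₓP - ρx²P` on `I × ℝ`. -/
theorem stmt_11 (θ a b ρ : ℝ) (I : Set ℝ) (hI : IsOpen I) (hI' : I.OrdConnected)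
    (α β γ μ ν φ : ℝ → ℝ)
    (hα : ∀ t ∈ I, HasDerivAt α (4 * θ * α t ^ 2 - 2 * a * α t - ρ) t)
    (hβ : ∀ t ∈ I, HasDerivAt β (4 * θ * α t * β t - a * β t) t)
    (hγ : ∀ t ∈ I, HasDerivAt γ (θ * β t ^ 2) t)
    (hμ : ∀ t ∈ I, HasDerivAt μ (4 * θ * α t * μ t - a * μ t - 2 * b * α t) t)
    (hν : ∀ t ∈ I, HasDerivAt ν (2 * θ * β t * μ t - b * β t) t)
    (hφ : ∀ t ∈ I, HasDerivAt φ (φ t * (θ * μ t ^ 2 + 2 * θ * α t - b * μ t)) t)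
    (x₀ : ℝ) (P : ℝ → ℝ → ℝ)
    (hP : ∀ t x, P t x =
      φ t * Real.exp (α t * x ^ 2 + β t * x * x₀ + γ t * x₀ ^ 2 + μ t * x + ν t * x₀)) :
    ∀ t ∈ I, ∀ x : ℝ,
      deriv (fun t' => P t' x) t =
        θ * deriv (deriv (fun x' => P t x')) x
          - (a * x + b) * deriv (fun x' => P t x') x
          - ρ * x ^ 2 * P t x := by
  intro t ht x
  -- abbreviations for the exponent as a function of x (canonical form)
  set c1 : ℝ := β t * x₀ + μ t with hc1
  set c0 : ℝ := γ t * x₀ ^ 2 + ν t * x₀ with hc0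
  -- P t · as canonical function
  have hfun : (fun x' => P t x') = fun y => φ t * Real.exp (α t * y ^ 2 + c1 * y + c0) := by
    funext y
    rw [hP, hc1, hc0]
    ring_nf
  -- exponent derivative in space
  have hq : ∀ y : ℝ, HasDerivAt (fun y => α t * y ^ 2 + c1 * y + c0)
      (2 * α t * y + c1) y := by
    intro y
    have h1 := (hasDerivAt_pow 2 y).const_mul (α t)
    have h2 := (hasDerivAt_id' (𝕜 := ℝ) y).const_mul c1
    have := (h1.add h2).add_const c0
    convert this using 1
    all_goals first | rfl | (simp; ring)
  -- space first derivative
  have hsp : ∀ y : ℝ, HasDerivAt (fun y => φ t * Real.exp (α t * y ^ 2 + c1 * y + c0))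
      (φ t * Real.exp (α t * y ^ 2 + c1 * y + c0) * (2 * α t * y + c1)) y := by
    intro y
    have := ((hq y).exp).const_mul (φ t)
    convert this using 1
    all_goals first | rfl | ring
  have hd1 : deriv (fun x' => P t x')
      = fun y => φ t * Real.exp (α t * y ^ 2 + c1 * y + c0) * (2 * α t * y + c1) := by
    rw [hfun]
    funext y
    exact (hsp y).deriv
  -- space second derivative
  have hd2 : deriv (deriv (fun x' => P t x')) x
      = φ t * Real.exp (α t * x ^ 2 + c1 * x + c0) * (2 * α t * x + c1) * (2 * α t * x + c1)
        + φ t * Real.exp (α t * x ^ 2 + c1 * x + c0) * (2 * α t) := by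
    rw [hd1]
    have hlin : HasDerivAt (fun y : ℝ => 2 * α t * y + c1) (2 * α t) x := by
      have := ((hasDerivAt_id' (𝕜 := ℝ) x).const_mul (2 * α t)).add_const c1
      simpa using this
    exact ((hsp x).mul hlin).deriv
  -- time derivative
  have hqt : HasDerivAt
      (fun t' => α t' * x ^ 2 + β t' * x * x₀ + γ t' * x₀ ^ 2 + μ t' * x + ν t' * x₀)
      ((4 * θ * α t ^ 2 - 2 * a * α t - ρ) * x ^ 2
        + (4 * θ * α t * β t - a * β t) * x * x₀
        + (θ * β t ^ 2) * x₀ ^ 2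
        + (4 * θ * α t * μ t - a * μ t - 2 * b * α t) * x
        + (2 * θ * β t * μ t - b * β t) * x₀) t := by
    exact (((((hα t ht).mul_const (x ^ 2)).add (((hβ t ht).mul_const x).mul_const x₀)).add
      ((hγ t ht).mul_const (x₀ ^ 2))).add ((hμ t ht).mul_const x)).add ((hν t ht).mul_const x₀)
  have htime : HasDerivAt (fun t' => P t' x)
      (φ t * (θ * μ t ^ 2 + 2 * θ * α t - b * μ t)
          * Real.exp (α t * x ^ 2 + β t * x * x₀ + γ t * x₀ ^ 2 + μ t * x + ν t * x₀)
        + φ t * (Real.exp (α t * x ^ 2 + β t * x * x₀ + γ t * x₀ ^ 2 + μ t * x + ν t * x₀)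
          * ((4 * θ * α t ^ 2 - 2 * a * α t - ρ) * x ^ 2
            + (4 * θ * α t * β t - a * β t) * x * x₀
            + (θ * β t ^ 2) * x₀ ^ 2
            + (4 * θ * α t * μ t - a * μ t - 2 * b * α t) * x
            + (2 * θ * β t * μ t - b * β t) * x₀))) t := by
    have hfun2 : (fun t' => P t' x) = fun t' =>
        φ t' * Real.exp (α t' * x ^ 2 + β t' * x * x₀ + γ t' * x₀ ^ 2 + μ t' * x + ν t' * x₀) := by
      funext t'; exact hP t' x
    rw [hfun2]
    exact (hφ t ht).mul hqt.exp
  rw [htime.deriv, hd2, hd1, hP t x, hc1, hc0]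
  have hexp : Real.exp (α t * x ^ 2 + (β t * x₀ + μ t) * x + (γ t * x₀ ^ 2 + ν t * x₀))
      = Real.exp (α t * x ^ 2 + β t * x * x₀ + γ t * x₀ ^ 2 + μ t * x + ν t * x₀) := by
    ring_nf
  rw [hexp]
  ring
end

section
/- Let θ > 0, a, b ∈ ℝ, ρ ∈ ℝ \ {0} with a² + 4ρθ = 0. For x₀ ∈ ℝ define, for t > 0 and x ∈ ℝ, P(t, x) = (1/(4πθt))^{1/2} · exp{(a/2 - b²/(4θ))t + (a²b²/(48θ))t³} · exp{(a/(4θ) - 1/(4θt))·(x² + x₀²) + (1/(2θt))·x·x₀ + (-(ab/(4θ))t + b/(2θ))·(x + x₀)}. Then P satisfies ∂ₜP(t,x) = θ·∂ₓ²P(t,x) - (ax + b)·∂ₓP(t,x) - ρx²·P(t,x) for all t > 0 and x ∈ ℝ. -/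
private lemma aux_x (K A B C x₀ : ℝ) (y : ℝ) :
    HasDerivAt (fun x : ℝ => K * Real.exp (A*(x^2+x₀^2)+B*(x*x₀)+C*(x+x₀)))
      (K * Real.exp (A*(y^2+x₀^2)+B*(y*x₀)+C*(y+x₀)) * (2*A*y+B*x₀+C)) y := by
  have hq : HasDerivAt (fun x : ℝ => A*(x^2+x₀^2)+B*(x*x₀)+C*(x+x₀)) (2*A*y+B*x₀+C) y := by
    have h1 : HasDerivAt (fun x : ℝ => x^2+x₀^2) (2*y) y := by
      simpa using (hasDerivAt_pow 2 y).add_const (x₀^2)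
    have h2 : HasDerivAt (fun x : ℝ => x*x₀) x₀ y := hasDerivAt_mul_const x₀
    have h3 : HasDerivAt (fun x : ℝ => x+x₀) 1 y := (hasDerivAt_id y).add_const x₀
    have := ((h1.const_mul A).add (h2.const_mul B)).add (h3.const_mul C)
    exact this.congr_deriv (by ring)
  have := (hq.exp).const_mul K
  exact this.congr_deriv (by ring)

private lemma aux_xx (K A B C x₀ : ℝ) (x : ℝ) :
    HasDerivAt (fun y : ℝ => K * Real.exp (A*(y^2+x₀^2)+B*(y*x₀)+C*(y+x₀)) * (2*A*y+B*x₀+C))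
      (K * Real.exp (A*(x^2+x₀^2)+B*(x*x₀)+C*(x+x₀)) * ((2*A*x+B*x₀+C)^2 + 2*A)) x := by
  have hlin : HasDerivAt (fun y : ℝ => 2*A*y+B*x₀+C) (2*A) x := by
    have := ((hasDerivAt_id x).const_mul (2*A)).add_const (B*x₀+C)
    convert this using 1
    all_goals try rfl
    · funext y; simp; ring
    · simp
  have := (aux_x K A B C x₀ x).mul hlin
  exact this.congr_deriv (by ring)

private lemma aux_sqrt (c t : ℝ) (hc : 0 < c) (ht : 0 < t) :
    HasDerivAt (fun t' : ℝ => Real.sqrt (1/(c*t'))) (-(Real.sqrt (1/(c*t)))/(2*t)) t := by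
  have hct : (0:ℝ) < c*t := by positivity
  have h1 : HasDerivAt (fun t' : ℝ => c*t') c t := by
    simpa using (hasDerivAt_id t).const_mul c
  have h2 : HasDerivAt (fun t' : ℝ => 1/(c*t')) (-c/(c*t)^2) t := by
    simp only [one_div]; exact h1.inv hct.ne'
  have h3 := h2.sqrt (by positivity)
  have hs : (0:ℝ) < Real.sqrt (1/(c*t)) := Real.sqrt_pos.mpr (by positivity)
  have hs2 : (Real.sqrt (1/(c*t)))^2 = 1/(c*t) := Real.sq_sqrt (by positivity)
  set s := Real.sqrt (1/(c*t)) with hsdef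
  convert h3 using 1
  rw [eq_div_iff (by positivity : (2:ℝ)*s ≠ 0)]
  have h4 : s^2 * (c*t) = 1 := by rw [hs2]; field_simp
  field_simp
  linear_combination (-1) * h4

private lemma aux_inv (d t : ℝ) (hd : d ≠ 0) (ht : t ≠ 0) :
    HasDerivAt (fun t' : ℝ => 1/(d*t')) (-(1/(d*t^2))) t := by
  have h1 : HasDerivAt (fun t' : ℝ => d*t') d t := by
    simpa using (hasDerivAt_id t).const_mul d
  have h2 : HasDerivAt (fun t' : ℝ => 1/(d*t')) (-d/(d*t)^2) t := by
    simp only [one_div]; exact h1.inv (by simp [hd, ht])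
  convert h2 using 1
  field_simp

/-- The Type II heat kernel (critical case `a² + 4ρθ = 0`) of
`L = -θ∂ₓ² + (ax+b)∂ₓ + ρx²` satisfies `∂ₜP = θ∂ₓ²P - (ax+b)∂ₓP - ρx²P` for `t > 0`. -/
theorem stmt_15 (θ a b ρ : ℝ) (hθ : 0 < θ) (hρ : ρ ≠ 0) (h : a ^ 2 + 4 * ρ * θ = 0)
    (x₀ : ℝ) (P : ℝ → ℝ → ℝ)
    (hP : ∀ t x, P t x =
      Real.sqrt (1 / (4 * Real.pi * θ * t))
        * Real.exp ((a / 2 - b ^ 2 / (4 * θ)) * t + a ^ 2 * b ^ 2 / (48 * θ) * t ^ 3)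
        * Real.exp ((a / (4 * θ) - 1 / (4 * θ * t)) * (x ^ 2 + x₀ ^ 2)
            + 1 / (2 * θ * t) * (x * x₀)
            + (-(a * b / (4 * θ)) * t + b / (2 * θ)) * (x + x₀))) :
    ∀ t ∈ Set.Ioi (0 : ℝ), ∀ x : ℝ,
      deriv (fun t' => P t' x) t =
        θ * deriv (deriv (fun x' => P t x')) x
          - (a * x + b) * deriv (fun x' => P t x') x
          - ρ * x ^ 2 * P t x := by
  intro t ht x
  have ht' : (0:ℝ) < t := ht
  have hπ := Real.pi_pos
  have hρval : ρ = -(a^2)/(4*θ) := by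
    field_simp
    linarith [h]
  -- abbreviations
  set A : ℝ := a / (4 * θ) - 1 / (4 * θ * t) with hA
  set B : ℝ := 1 / (2 * θ * t) with hB
  set C : ℝ := -(a * b / (4 * θ)) * t + b / (2 * θ) with hC
  set s : ℝ := Real.sqrt (1 / (4 * Real.pi * θ * t)) with hsdef
  set E1 : ℝ := Real.exp ((a / 2 - b ^ 2 / (4 * θ)) * t + a ^ 2 * b ^ 2 / (48 * θ) * t ^ 3) with hE1
  set K : ℝ := s * E1 with hK
  -- x-derivatives
  have hxfun : (fun x' => P t x')
      = (fun x' : ℝ => K * Real.exp (A*(x'^2+x₀^2)+B*(x'*x₀)+C*(x'+x₀))) := by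
    funext y; rw [hP t y]
  have hd1 : deriv (fun x' => P t x')
      = (fun y : ℝ => K * Real.exp (A*(y^2+x₀^2)+B*(y*x₀)+C*(y+x₀)) * (2*A*y+B*x₀+C)) := by
    rw [hxfun]; funext y; exact (aux_x K A B C x₀ y).deriv
  have hd2 : deriv (deriv (fun x' => P t x')) x
      = K * Real.exp (A*(x^2+x₀^2)+B*(x*x₀)+C*(x+x₀)) * ((2*A*x+B*x₀+C)^2 + 2*A) := by
    rw [hd1]; exact (aux_xx K A B C x₀ x).deriv
  have hd1x : deriv (fun x' => P t x') x
      = K * Real.exp (A*(x^2+x₀^2)+B*(x*x₀)+C*(x+x₀)) * (2*A*x+B*x₀+C) := by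
    rw [hd1]
  -- t-derivative
  have hS : HasDerivAt (fun t' : ℝ => Real.sqrt (1/(4*Real.pi*θ*t'))) (-(s)/(2*t)) t := by
    rw [hsdef]
    exact aux_sqrt (4*Real.pi*θ) t (by positivity) ht'
  have hg : HasDerivAt (fun t' : ℝ => (a / 2 - b ^ 2 / (4 * θ)) * t' + a ^ 2 * b ^ 2 / (48 * θ) * t' ^ 3)
      ((a / 2 - b ^ 2 / (4 * θ)) + 3 * (a ^ 2 * b ^ 2 / (48 * θ)) * t ^ 2) t := by
    have h1 : HasDerivAt (fun t' : ℝ => t') 1 t := hasDerivAt_id t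
    have h3 : HasDerivAt (fun t' : ℝ => t' ^ 3) (3 * t ^ 2) t := by
      simpa using hasDerivAt_pow 3 t
    have := (h1.const_mul (a / 2 - b ^ 2 / (4 * θ))).add (h3.const_mul (a ^ 2 * b ^ 2 / (48 * θ)))
    exact this.congr_deriv (by ring)
  have hQ : HasDerivAt (fun t' : ℝ => (a / (4 * θ) - 1 / (4 * θ * t')) * (x ^ 2 + x₀ ^ 2)
            + 1 / (2 * θ * t') * (x * x₀)
            + (-(a * b / (4 * θ)) * t' + b / (2 * θ)) * (x + x₀))
      ((1/(4*θ*t^2)) * (x ^ 2 + x₀ ^ 2) - (1/(2*θ*t^2)) * (x * x₀)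
        - (a * b / (4 * θ)) * (x + x₀)) t := by
    have h4 : HasDerivAt (fun t' : ℝ => 1/(4*θ*t')) (-(1/(4*θ*t^2))) t :=
      aux_inv (4*θ) t (by positivity) ht'.ne'
    have h2 : HasDerivAt (fun t' : ℝ => 1/(2*θ*t')) (-(1/(2*θ*t^2))) t :=
      aux_inv (2*θ) t (by positivity) ht'.ne'
    have ha : HasDerivAt (fun t' : ℝ => a / (4 * θ) - 1 / (4 * θ * t')) (0 - (-(1/(4*θ*t^2)))) t :=
      (hasDerivAt_const t (a / (4 * θ))).sub h4
    have hc : HasDerivAt (fun t' : ℝ => -(a * b / (4 * θ)) * t' + b / (2 * θ))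
        (-(a * b / (4 * θ))) t := by
      have := ((hasDerivAt_id t).const_mul (-(a * b / (4 * θ)))).add_const (b / (2 * θ))
      convert this using 1
      all_goals try rfl
      · simp
    have := ((ha.mul_const (x ^ 2 + x₀ ^ 2)).add (h2.mul_const (x * x₀))).add
      (hc.mul_const (x + x₀))
    exact this.congr_deriv (by ring)
  have htfun : (fun t' => P t' x)
      = (fun t' : ℝ => Real.sqrt (1/(4*Real.pi*θ*t'))
          * Real.exp ((a / 2 - b ^ 2 / (4 * θ)) * t' + a ^ 2 * b ^ 2 / (48 * θ) * t' ^ 3)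
          * Real.exp ((a / (4 * θ) - 1 / (4 * θ * t')) * (x ^ 2 + x₀ ^ 2)
            + 1 / (2 * θ * t') * (x * x₀)
            + (-(a * b / (4 * θ)) * t' + b / (2 * θ)) * (x + x₀))) := by
    funext t'; rw [hP t' x]
  have hT := (hS.mul hg.exp).mul hQ.exp
  have hdt : deriv (fun t' => P t' x) t
      = (-(s)/(2*t) * E1 + s * (E1 * ((a / 2 - b ^ 2 / (4 * θ)) + 3 * (a ^ 2 * b ^ 2 / (48 * θ)) * t ^ 2)))
          * Real.exp (A*(x^2+x₀^2)+B*(x*x₀)+C*(x+x₀))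
        + s * E1 * (Real.exp (A*(x^2+x₀^2)+B*(x*x₀)+C*(x+x₀))
            * ((1/(4*θ*t^2)) * (x ^ 2 + x₀ ^ 2) - (1/(2*θ*t^2)) * (x * x₀)
              - (a * b / (4 * θ)) * (x + x₀))) := by
    rw [htfun]; erw [hT.deriv]; rw [hA, hB, hC]; rfl
  -- final algebra
  rw [hdt, hd2, hd1x, hP t x, hρval, hA, hB, hC, hK, hsdef, hE1]
  have hθ' : θ ≠ 0 := hθ.ne'
  have ht'' : t ≠ 0 := ht'.ne'
  field_simp
  ring
end

section
/- Let θ > 0, a, b ∈ ℝ, ρ ∈ ℝ \ {0} with a² + 4ρθ < 0, and set λ := √(-a² - 4ρθ). For x₀ ∈ ℝ define, for t ∈ (0, π/λ) and x ∈ ℝ, P(t, x) = (λ/(4πθ·sin(λt)))^{1/2} · exp{(a/2 + ρb²/λ²)t - (a²b²/(4θλ³))·cot(λt)} · exp{(a/(4θ) - (λ/(4θ))·cot(λt))·(x² + x₀²)} · exp{(λ/(2θ·sin(λt)))·x·x₀} · exp{((ab/(2θλ))·cot(λt) + b/(2θ))·x} · exp{(-(ab/(2θλ·sin(λt))) + b/(2θ))·x₀}.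 Then P satisfies ∂ₜP(t,x) = θ·∂ₓ²P(t,x) - (ax + b)·∂ₓP(t,x) - ρx²·P(t,x) for all t ∈ (0, π/λ) and x ∈ ℝ. -/
theorem quadExp_hasDerivAt (C A B D x : ℝ) :
    HasDerivAt (fun y : ℝ => C * Real.exp (A * y ^ 2 + B * y + D))
      (C * Real.exp (A * x ^ 2 + B * x + D) * (2 * A * x + B)) x := by
  have h1 : HasDerivAt (fun y : ℝ => A * y ^ 2 + B * y + D) (2 * A * x + B) x := by
    have h := (((hasDerivAt_pow 2 x).const_mul A).add
      ((hasDerivAt_id x).const_mul B)).add_const D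
    simpa using h.congr_deriv (by ring)
  exact (h1.exp.const_mul C).congr_deriv (by ring)

theorem quadExp_deriv (C A B D : ℝ) :
    deriv (fun y : ℝ => C * Real.exp (A * y ^ 2 + B * y + D))
      = fun x => C * Real.exp (A * x ^ 2 + B * x + D) * (2 * A * x + B) :=
  funext fun x => (quadExp_hasDerivAt C A B D x).deriv

theorem quadExp_deriv2 (C A B D x : ℝ) :
    deriv (deriv (fun y : ℝ => C * Real.exp (A * y ^ 2 + B * y + D))) x
      = C * Real.exp (A * x ^ 2 + B * x + D) * ((2 * A * x + B) ^ 2 + 2 * A) := by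
  rw [quadExp_deriv]
  have h2 : HasDerivAt (fun y : ℝ => 2 * A * y + B) (2 * A) x := by
    simpa using ((hasDerivAt_id x).const_mul (2 * A)).add_const B
  have h := ((quadExp_hasDerivAt C A B D x).mul h2).congr_deriv
    (show _ = C * Real.exp (A * x ^ 2 + B * x + D) * ((2 * A * x + B) ^ 2 + 2 * A) by ring)
  exact h.deriv

theorem aux_sqrtfac (T lam pi θ s c : ℝ) (hT : T ≠ 0) (hs : s ≠ 0) (hpi : pi ≠ 0)
    (hθ : θ ≠ 0) (hT2 : T ^ 2 * (4 * pi * θ * s) = lam) :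
    1 / (2 * T) * (lam * (-(4 * pi * θ * (c * lam)) / (4 * pi * θ * s) ^ 2))
      = T * (-(lam * c) / (2 * s)) := by
  field_simp
  linear_combination (lam * c) * hT2

set_option maxHeartbeats 1600000 in
theorem aux_key (a b θ ρ lam s c x x₀ : ℝ) (hθ : θ ≠ 0) (hlam : lam ≠ 0) (hs : s ≠ 0)
    (hsc : s ^ 2 + c ^ 2 = 1) (hlam2 : lam ^ 2 = -a ^ 2 - 4 * ρ * θ) :
    -(lam * c) / (2 * s) + ((a / 2 + ρ * b ^ 2 / lam ^ 2) + (-(a ^ 2 * b ^ 2 / (4 * θ * lam ^ 3)) - lam / (4 * θ) * (x ^ 2 + x₀ ^ 2) + a * b / (2 * θ * lam) * x) * ((-(lam * s ^ 2) - lam * c ^ 2) / s ^ 2) + (lam / (2 * θ) * (x * x₀) - a * b / (2 * θ * lam) * x₀) * (-(c * lam) / s ^ 2))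
      = θ * ((2 * (a / (4 * θ) - lam / (4 * θ) * (c / s)) * x + (lam / (2 * θ * s) * x₀ + (a * b / (2 * θ * lam) * (c / s) + b / (2 * θ)))) ^ 2 + 2 * (a / (4 * θ) - lam / (4 * θ) * (c / s))) - (a * x + b) * (2 * (a / (4 * θ) - lam / (4 * θ) * (c / s)) * x + (lam / (2 * θ * s) * x₀ + (a * b / (2 * θ * lam) * (c / s) + b / (2 * θ)))) - ρ * x ^ 2 := by
  field_simp
  linear_combination (16 * lam ^ 4 * x₀ ^ 2) * hsc + (16 * s ^ 2 * (lam ^ 2 * x ^ 2 + b ^ 2)) * hlam2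

set_option maxHeartbeats 2000000 in
/-- The Type III heat kernel (case `a² + 4ρθ < 0`, `λ = √(-a²-4ρθ)`) of
`L = -θ∂ₓ² + (ax+b)∂ₓ + ρx²` satisfies `∂ₜP = θ∂ₓ²P - (ax+b)∂ₓP - ρx²P` on `(0, π/λ)`. -/
theorem stmt_16 (θ a b ρ : ℝ) (hθ : 0 < θ) (hρ : ρ ≠ 0) (h : a ^ 2 + 4 * ρ * θ < 0)
    (lam : ℝ) (hlam : lam = Real.sqrt (-a ^ 2 - 4 * ρ * θ))
    (x₀ : ℝ) (P : ℝ → ℝ → ℝ)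
    (hP : ∀ t x, P t x =
      Real.sqrt (lam / (4 * Real.pi * θ * Real.sin (lam * t)))
        * Real.exp ((a / 2 + ρ * b ^ 2 / lam ^ 2) * t
            - a ^ 2 * b ^ 2 / (4 * θ * lam ^ 3) * Real.cot (lam * t))
        * Real.exp ((a / (4 * θ) - lam / (4 * θ) * Real.cot (lam * t)) * (x ^ 2 + x₀ ^ 2))
        * Real.exp (lam / (2 * θ * Real.sin (lam * t)) * (x * x₀))
        * Real.exp ((a * b / (2 * θ * lam) * Real.cot (lam * t) + b / (2 * θ)) * x)
        * Real.exp ((-(a * b / (2 * θ * lam * Real.sin (lam * t))) + b / (2 * θ)) * x₀)) :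
    ∀ t ∈ Set.Ioo (0 : ℝ) (Real.pi / lam), ∀ x : ℝ,
      deriv (fun t' => P t' x) t =
        θ * deriv (deriv (fun x' => P t x')) x
          - (a * x + b) * deriv (fun x' => P t x') x
          - ρ * x ^ 2 * P t x := by
  intro t ht x
  obtain ⟨ht0, ht2⟩ := ht
  have hπ := Real.pi_pos
  have hneg : (0:ℝ) < -a ^ 2 - 4 * ρ * θ := by linarith
  have hlam0 : 0 < lam := by rw [hlam]; exact Real.sqrt_pos.mpr hneg
  have hlam2 : lam ^ 2 = -a ^ 2 - 4 * ρ * θ := by rw [hlam, Real.sq_sqrt hneg.le]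
  have hts : 0 < lam * t := mul_pos hlam0 ht0
  have htpi : lam * t < Real.pi := by
    have := (lt_div_iff₀ hlam0).mp ht2
    linarith [this, mul_comm t lam]
  have hs0 : 0 < Real.sin (lam * t) := Real.sin_pos_of_pos_of_lt_pi hts htpi
  have hsc : Real.sin (lam * t) ^ 2 + Real.cos (lam * t) ^ 2 = 1 := Real.sin_sq_add_cos_sq (lam * t)
  have hden : 0 < 4 * Real.pi * θ * Real.sin (lam * t) := by positivity
  have hQpos : 0 < lam / (4 * Real.pi * θ * Real.sin (lam * t)) := div_pos hlam0 hden
  have hS0 : 0 < Real.sqrt (lam / (4 * Real.pi * θ * Real.sin (lam * t))) := Real.sqrt_pos.mpr hQpos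
  have hS2 : Real.sqrt (lam / (4 * Real.pi * θ * Real.sin (lam * t))) ^ 2 = lam / (4 * Real.pi * θ * Real.sin (lam * t)) := Real.sq_sqrt hQpos.le
  have hS2' : Real.sqrt (lam / (4 * Real.pi * θ * Real.sin (lam * t))) ^ 2 * (4 * Real.pi * θ * Real.sin (lam * t)) = lam := by
    rw [hS2]; exact div_mul_cancel₀ _ hden.ne'
  -- canonical x-form
  have hx : (fun x' => P t x')
      = (fun x' => Real.sqrt (lam / (4 * Real.pi * θ * Real.sin (lam * t))) * Real.exp ((a / (4 * θ) - lam / (4 * θ) * (Real.cos (lam * t) / Real.sin (lam * t))) * x' ^ 2 + (lam / (2 * θ * Real.sin (lam * t)) * x₀ + (a * b / (2 * θ * lam) * (Real.cos (lam * t) / Real.sin (lam * t)) + b / (2 * θ))) * x' + ((a / 2 + ρ * b ^ 2 / lam ^ 2) * t - a ^ 2 * b ^ 2 / (4 * θ * lam ^ 3) * (Real.cos (lam * t) / Real.sin (lam * t)) + (a / (4 * θ) - lam / (4 * θ) * (Real.cos (lam * t) / Real.sin (lam * t))) * x₀ ^ 2 + (-(a * b / (2 * θ * lam * Real.sin (lam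 * t))) + b / (2 * θ)) * x₀))) := by
    funext x'
    rw [hP]
    simp only [Real.cot_eq_cos_div_sin, mul_assoc, ← Real.exp_add]
    congr 1
    ring
  have hdx : deriv (fun x' => P t x') x
      = Real.sqrt (lam / (4 * Real.pi * θ * Real.sin (lam * t))) * Real.exp ((a / (4 * θ) - lam / (4 * θ) * (Real.cos (lam * t) / Real.sin (lam * t))) * x ^ 2 + (lam / (2 * θ * Real.sin (lam * t)) * x₀ + (a * b / (2 * θ * lam) * (Real.cos (lam * t) / Real.sin (lam * t)) + b / (2 * θ))) * x + ((a / 2 + ρ * b ^ 2 / lam ^ 2) * t - a ^ 2 * b ^ 2 / (4 * θ * lam ^ 3) * (Real.cos (lam * t) / Real.sin (lam * t)) + (a / (4 * θ) - lam / (4 * θ) * (Real.cos (lam * t) / Real.sin (lam * t))) * x₀ ^ 2 + (-(a * b / (2 * θ * lam * Real.sin (lam * t))) + b / (2 * θ)) * x₀)) * (2 * (a / (4 * θ) - lam / (4 * θ) * (Real.cos (lam * t) / Real.sin (lam * t))) * x + (lam / (2 * θ * Real.sin (lam * t)) * x₀ + (a * b / (2 * θ * lam) * (Real.cos (lam * t)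 / Real.sin (lam * t)) + b / (2 * θ)))) := by
    rw [hx]; exact (quadExp_hasDerivAt _ _ _ _ x).deriv
  have hdxx : deriv (deriv (fun x' => P t x')) x
      = Real.sqrt (lam / (4 * Real.pi * θ * Real.sin (lam * t))) * Real.exp ((a / (4 * θ) - lam / (4 * θ) * (Real.cos (lam * t) / Real.sin (lam * t))) * x ^ 2 + (lam / (2 * θ * Real.sin (lam * t)) * x₀ + (a * b / (2 * θ * lam) * (Real.cos (lam * t) / Real.sin (lam * t)) + b / (2 * θ))) * x + ((a / 2 + ρ * b ^ 2 / lam ^ 2) * t - a ^ 2 * b ^ 2 / (4 * θ * lam ^ 3) * (Real.cos (lam * t) / Real.sin (lam * t)) + (a / (4 * θ) - lam / (4 * θ) * (Real.cos (lam * t) / Real.sin (lam * t))) * x₀ ^ 2 + (-(a * b / (2 * θ * lam * Real.sin (lam * t))) + b / (2 * θ)) * x₀)) * ((2 * (a / (4 * θ) - lam / (4 * θ) * (Real.cos (lam * t) / Real.sin (lam * t))) * x + (lam / (2 * θ * Real.sin (lam * t)) * x₀ + (a * b / (2 * θ * lam) * (Real.cos (lam * t) / Real.sin (lam * t)) + b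 / (2 * θ)))) ^ 2 + 2 * (a / (4 * θ) - lam / (4 * θ) * (Real.cos (lam * t) / Real.sin (lam * t)))) := by
    rw [hx]; exact quadExp_deriv2 _ _ _ _ x
  have hPtx : P t x = Real.sqrt (lam / (4 * Real.pi * θ * Real.sin (lam * t))) * Real.exp ((a / (4 * θ) - lam / (4 * θ) * (Real.cos (lam * t) / Real.sin (lam * t))) * x ^ 2 + (lam / (2 * θ * Real.sin (lam * t)) * x₀ + (a * b / (2 * θ * lam) * (Real.cos (lam * t) / Real.sin (lam * t)) + b / (2 * θ))) * x + ((a / 2 + ρ * b ^ 2 / lam ^ 2) * t - a ^ 2 * b ^ 2 / (4 * θ * lam ^ 3) * (Real.cos (lam * t) / Real.sin (lam * t)) + (a / (4 * θ) - lam / (4 * θ) * (Real.cos (lam * t) / Real.sin (lam * t))) * x₀ ^ 2 + (-(a * b / (2 * θ * lam * Real.sin (lam * t))) + b / (2 * θ)) * x₀)) := by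
    rw [hP]
    simp only [Real.cot_eq_cos_div_sin, mul_assoc, ← Real.exp_add]
    congr 1
    ring
  -- canonical t-form
  have htfun : (fun t' => P t' x)
      = (fun t' => Real.sqrt (lam / (4 * Real.pi * θ * Real.sin (lam * t')))
          * Real.exp ((a / 2 + ρ * b ^ 2 / lam ^ 2) * t' + (-(a ^ 2 * b ^ 2 / (4 * θ * lam ^ 3)) - lam / (4 * θ) * (x ^ 2 + x₀ ^ 2) + a * b / (2 * θ * lam) * x) * (Real.cos (lam * t') / Real.sin (lam * t')) + (lam / (2 * θ) * (x * x₀) - a * b / (2 * θ * lam) * x₀) * (Real.sin (lam * t'))⁻¹ + (a / (4 * θ) * (x ^ 2 + x₀ ^ 2) + b / (2 * θ) * x + b / (2 * θ) * x₀))) := by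
    funext t'
    rw [hP]
    simp only [Real.cot_eq_cos_div_sin, mul_assoc, ← Real.exp_add]
    congr 1
    ring
  have hmul : HasDerivAt (fun t' : ℝ => lam * t') lam t := by
    simpa using (hasDerivAt_id t).const_mul lam
  have hsin' : HasDerivAt (fun t' => Real.sin (lam * t')) (Real.cos (lam * t) * lam) t :=
    (Real.hasDerivAt_sin (lam * t)).comp t hmul
  have hcos' : HasDerivAt (fun t' => Real.cos (lam * t')) (-Real.sin (lam * t) * lam) t :=
    ((Real.hasDerivAt_cos (lam * t)).comp t hmul).congr_deriv (by ring)
  have hquot : HasDerivAt (fun t' => Real.cos (lam * t') / Real.sin (lam * t'))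
      ((-(lam * Real.sin (lam * t) ^ 2) - lam * Real.cos (lam * t) ^ 2) / Real.sin (lam * t) ^ 2) t :=
    (hcos'.div hsin' hs0.ne').congr_deriv (by ring)
  have hinv : HasDerivAt (fun t' => (Real.sin (lam * t'))⁻¹)
      (-(Real.cos (lam * t) * lam) / Real.sin (lam * t) ^ 2) t :=
    (hsin'.inv hs0.ne').congr_deriv (by ring)
  have h1 : HasDerivAt (fun t' : ℝ => (a / 2 + ρ * b ^ 2 / lam ^ 2) * t') (a / 2 + ρ * b ^ 2 / lam ^ 2) t := by
    simpa using (hasDerivAt_id t).const_mul (a / 2 + ρ * b ^ 2 / lam ^ 2)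
  have harg : HasDerivAt (fun t' => (a / 2 + ρ * b ^ 2 / lam ^ 2) * t' + (-(a ^ 2 * b ^ 2 / (4 * θ * lam ^ 3)) - lam / (4 * θ) * (x ^ 2 + x₀ ^ 2) + a * b / (2 * θ * lam) * x) * (Real.cos (lam * t') / Real.sin (lam * t')) + (lam / (2 * θ) * (x * x₀) - a * b / (2 * θ * lam) * x₀) * (Real.sin (lam * t'))⁻¹ + (a / (4 * θ) * (x ^ 2 + x₀ ^ 2) + b / (2 * θ) * x + b / (2 * θ) * x₀)) ((a / 2 + ρ * b ^ 2 / lam ^ 2) + (-(a ^ 2 * b ^ 2 / (4 * θ * lam ^ 3)) - lam / (4 * θ) * (x ^ 2 + x₀ ^ 2) + a * b / (2 * θ * lam) * x) * ((-(lam * Real.sin (lam * t) ^ 2) - lam * Real.cos (lam * t) ^ 2) / Real.sin (lam * t) ^ 2) + (lam / (2 * θ) * (x * x₀) - a * b / (2 * θ * lam) * x₀) * (-(Real.cos (lam * t) * lam) / Real.sin (lam * t) ^ 2)) t := by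
    exact ((((h1.add (hquot.const_mul (-(a ^ 2 * b ^ 2 / (4 * θ * lam ^ 3)) - lam / (4 * θ) * (x ^ 2 + x₀ ^ 2) + a * b / (2 * θ * lam) * x))).add
      (hinv.const_mul (lam / (2 * θ) * (x * x₀) - a * b / (2 * θ * lam) * x₀))).add_const (a / (4 * θ) * (x ^ 2 + x₀ ^ 2) + b / (2 * θ) * x + b / (2 * θ) * x₀))).congr_deriv (by ring)
  have hexp : HasDerivAt (fun t' => Real.exp ((a / 2 + ρ * b ^ 2 / lam ^ 2) * t' + (-(a ^ 2 * b ^ 2 / (4 * θ * lam ^ 3)) - lam / (4 * θ) * (x ^ 2 + x₀ ^ 2) + a * b / (2 * θ * lam) * x) * (Real.cos (lam * t') / Real.sin (lam * t')) + (lam / (2 * θ) * (x * x₀) - a * b / (2 * θ * lam) * x₀) * (Real.sin (lam * t'))⁻¹ + (a / (4 * θ) * (x ^ 2 + x₀ ^ 2) + b / (2 * θ) * x + b / (2 * θ) * x₀)))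
      (Real.exp ((a / 2 + ρ * b ^ 2 / lam ^ 2) * t + (-(a ^ 2 * b ^ 2 / (4 * θ * lam ^ 3)) - lam / (4 * θ) * (x ^ 2 + x₀ ^ 2) + a * b / (2 * θ * lam) * x) * (Real.cos (lam * t) / Real.sin (lam * t)) + (lam / (2 * θ) * (x * x₀) - a * b / (2 * θ * lam) * x₀) * (Real.sin (lam * t))⁻¹ + (a / (4 * θ) * (x ^ 2 + x₀ ^ 2) + b / (2 * θ) * x + b / (2 * θ) * x₀)) * ((a / 2 + ρ * b ^ 2 / lam ^ 2) + (-(a ^ 2 * b ^ 2 / (4 * θ * lam ^ 3)) - lam / (4 * θ) * (x ^ 2 + x₀ ^ 2) + a * b / (2 * θ * lam) * x) * ((-(lam * Real.sin (lam * t) ^ 2) - lam * Real.cos (lam * t) ^ 2) / Real.sin (lam * t) ^ 2) + (lam / (2 * θ) * (x * x₀) - a * b / (2 * θ * lam) * x₀) * (-(Real.cos (lam * t) * lam) / Real.sin (lam * t) ^ 2))) t := harg.exp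
  have hQd : HasDerivAt (fun t' => lam / (4 * Real.pi * θ * Real.sin (lam * t')))
      (lam * (-(4 * Real.pi * θ * (Real.cos (lam * t) * lam)) / (4 * Real.pi * θ * Real.sin (lam * t)) ^ 2)) t := by
    have hd : HasDerivAt (fun t' => 4 * Real.pi * θ * Real.sin (lam * t'))
        (4 * Real.pi * θ * (Real.cos (lam * t) * lam)) t := hsin'.const_mul _
    have := (hd.inv (by positivity)).const_mul lam
    simpa [div_eq_mul_inv] using this.congr_deriv (by ring)
  have hsqrt : HasDerivAt (fun t' => Real.sqrt (lam / (4 * Real.pi * θ * Real.sin (lam * t'))))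
      (1 / (2 * Real.sqrt (lam / (4 * Real.pi * θ * Real.sin (lam * t)))) * (lam * (-(4 * Real.pi * θ * (Real.cos (lam * t) * lam)) / (4 * Real.pi * θ * Real.sin (lam * t)) ^ 2))) t := by
    have h0 : lam / (4 * Real.pi * θ * Real.sin (lam * t)) ≠ 0 := hQpos.ne'
    exact ((Real.hasDerivAt_sqrt h0).comp t hQd).congr_deriv (by ring)
  have hdt : deriv (fun t' => P t' x) t
      = (1 / (2 * Real.sqrt (lam / (4 * Real.pi * θ * Real.sin (lam * t)))) * (lam * (-(4 * Real.pi * θ * (Real.cos (lam * t) * lam)) / (4 * Real.pi * θ * Real.sin (lam * t)) ^ 2))) * Real.exp ((a / 2 + ρ * b ^ 2 / lam ^ 2) * t + (-(a ^ 2 * b ^ 2 / (4 * θ * lam ^ 3)) - lam / (4 * θ) * (x ^ 2 + x₀ ^ 2) + a * b / (2 * θ * lam) * x) * (Real.cos (lam * t) / Real.sin (lam * t)) + (lam / (2 * θ) * (x * x₀) - a * b / (2 * θ * lam) * x₀) * (Real.sin (lam * t))⁻¹ + (a / (4 * θ) * (x ^ 2 + x₀ ^ 2) + b / (2 * θ)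 * x + b / (2 * θ) * x₀))
        + Real.sqrt (lam / (4 * Real.pi * θ * Real.sin (lam * t))) * (Real.exp ((a / 2 + ρ * b ^ 2 / lam ^ 2) * t + (-(a ^ 2 * b ^ 2 / (4 * θ * lam ^ 3)) - lam / (4 * θ) * (x ^ 2 + x₀ ^ 2) + a * b / (2 * θ * lam) * x) * (Real.cos (lam * t) / Real.sin (lam * t)) + (lam / (2 * θ) * (x * x₀) - a * b / (2 * θ * lam) * x₀) * (Real.sin (lam * t))⁻¹ + (a / (4 * θ) * (x ^ 2 + x₀ ^ 2) + b / (2 * θ) * x + b / (2 * θ) * x₀)) * ((a / 2 + ρ * b ^ 2 / lam ^ 2) + (-(a ^ 2 * b ^ 2 / (4 * θ * lam ^ 3)) - lam / (4 * θ) * (x ^ 2 + x₀ ^ 2) + a * b / (2 * θ * lam) * x) * ((-(lam * Real.sin (lam * t) ^ 2) - lam * Real.cos (lam * t) ^ 2) / Real.sin (lam * t) ^ 2) + (lam / (2 * θ) * (x * x₀) - a * b / (2 * θ * lam) * x₀) * (-(Real.cos (lam * t) * lam) / Real.sin (lam * t) ^ 2))) := by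
    rw [htfun]; exact (hsqrt.mul hexp).deriv
  have hARG : ((a / 2 + ρ * b ^ 2 / lam ^ 2) * t + (-(a ^ 2 * b ^ 2 / (4 * θ * lam ^ 3)) - lam / (4 * θ) * (x ^ 2 + x₀ ^ 2) + a * b / (2 * θ * lam) * x) * (Real.cos (lam * t) / Real.sin (lam * t)) + (lam / (2 * θ) * (x * x₀) - a * b / (2 * θ * lam) * x₀) * (Real.sin (lam * t))⁻¹ + (a / (4 * θ) * (x ^ 2 + x₀ ^ 2) + b / (2 * θ) * x + b / (2 * θ) * x₀)) = (a / (4 * θ) - lam / (4 * θ) * (Real.cos (lam * t) / Real.sin (lam * t))) * x ^ 2 + (lam / (2 * θ * Real.sin (lam * t)) * x₀ + (a * b / (2 * θ * lam) * (Real.cos (lam * t) / Real.sin (lam * t)) + b / (2 * θ))) * x + ((a / 2 + ρ * b ^ 2 / lam ^ 2) * t - a ^ 2 * b ^ 2 / (4 * θ * lam ^ 3) * (Real.cos (lam * t) / Real.sin (lam * t)) + (a / (4 * θ) - lam / (4 * θ) * (Real.cos (lam * t) / Real.sin (lam * t))) * x₀ ^ 2 + (-(a * b / (2 * θ * lam *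 Real.sin (lam * t))) + b / (2 * θ)) * x₀) := by ring
  have hS' : (1 / (2 * Real.sqrt (lam / (4 * Real.pi * θ * Real.sin (lam * t)))) * (lam * (-(4 * Real.pi * θ * (Real.cos (lam * t) * lam)) / (4 * Real.pi * θ * Real.sin (lam * t)) ^ 2))) = Real.sqrt (lam / (4 * Real.pi * θ * Real.sin (lam * t))) * (-(lam * Real.cos (lam * t)) / (2 * Real.sin (lam * t))) :=
    aux_sqrtfac (Real.sqrt (lam / (4 * Real.pi * θ * Real.sin (lam * t)))) lam Real.pi θ (Real.sin (lam * t)) (Real.cos (lam * t)) hS0.ne' hs0.ne' hπ.ne' hθ.ne' hS2'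
  have key : -(lam * Real.cos (lam * t)) / (2 * Real.sin (lam * t)) + ((a / 2 + ρ * b ^ 2 / lam ^ 2) + (-(a ^ 2 * b ^ 2 / (4 * θ * lam ^ 3)) - lam / (4 * θ) * (x ^ 2 + x₀ ^ 2) + a * b / (2 * θ * lam) * x) * ((-(lam * Real.sin (lam * t) ^ 2) - lam * Real.cos (lam * t) ^ 2) / Real.sin (lam * t) ^ 2) + (lam / (2 * θ) * (x * x₀) - a * b / (2 * θ * lam) * x₀) * (-(Real.cos (lam * t) * lam) / Real.sin (lam * t) ^ 2))
      = θ * ((2 * (a / (4 * θ) - lam / (4 * θ) * (Real.cos (lam * t) / Real.sin (lam * t))) * x + (lam / (2 * θ * Real.sin (lam * t)) * x₀ + (a * b / (2 * θ * lam) * (Real.cos (lam * t) / Real.sin (lam * t)) + b / (2 * θ)))) ^ 2 + 2 * (a / (4 * θ) - lam / (4 * θ) * (Real.cos (lam * t) / Real.sin (lam * t)))) - (a * x + b) * (2 * (a / (4 * θ) - lam / (4 * θ) * (Real.cos (lam * t) / Real.sin (lam * t))) * x + (lam / (2 * θ * Real.sin (lam * t)) * x₀ + (a * b / (2 * θ *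 lam) * (Real.cos (lam * t) / Real.sin (lam * t)) + b / (2 * θ)))) - ρ * x ^ 2 :=
    aux_key a b θ ρ lam (Real.sin (lam * t)) (Real.cos (lam * t)) x x₀ hθ.ne' hlam0.ne' hs0.ne' hsc hlam2
  rw [hdt, hdxx, hdx, hPtx, hARG, hS']
  linear_combination (Real.sqrt (lam / (4 * Real.pi * θ * Real.sin (lam * t))) * Real.exp ((a / (4 * θ) - lam / (4 * θ) * (Real.cos (lam * t) / Real.sin (lam * t))) * x ^ 2 + (lam / (2 * θ * Real.sin (lam * t)) * x₀ + (a * b / (2 * θ * lam) * (Real.cos (lam * t) / Real.sin (lam * t)) + b / (2 * θ))) * x + ((a / 2 + ρ * b ^ 2 / lam ^ 2) * t - a ^ 2 * b ^ 2 / (4 * θ * lam ^ 3) * (Real.cos (lam * t) / Real.sin (lam * t)) + (a / (4 * θ) - lam / (4 * θ) * (Real.cos (lam * t) / Real.sin (lam * t))) * x₀ ^ 2 + (-(a * b / (2 * θ * lam * Real.sin (lam * t))) + b / (2 * θ)) * x₀))) * key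
end

section
/- Let n ≥ 1 and x₀ ∈ ℝⁿ. Define, for t > 0 and x ∈ ℝⁿ, P(t, x) = (√5·e^t / (4π·sinh(√5·t)))^{n/2} · exp{((1 - √5·coth(√5·t))/4)·(|x|² + |x₀|²) + (√5/(2·sinh(√5·t)))·(x·x₀)}, where x·x₀ is the Euclidean inner product and |·| the Euclidean norm. Then P satisfies ∂ₜP(t,x) = ΔP(t,x) - x·∇P(t,x) - |x|²·P(t,x) for all t > 0 and x ∈ ℝⁿ, where Δ and ∇ act in the variable x. -/
/-- The hyperbolic cotangent. -/
noncomputable def coth (x : ℝ) : ℝ := Real.cosh x / Real.sinh x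

private lemma core_identity (a s c S T D N : ℝ) (hs : s ≠ 0) (ha : a^2 = 5)
    (hc : c^2 = 1 + s^2) :
    N/2*(1 - a*(c/s)) + (5/(4*s^2)*(S+T) + (-(5*c)/(2*s^2))*D)
    = (4*((1-a*(c/s))/4)^2*S + 4*((1-a*(c/s))/4)*(a/(2*s))*D + (a/(2*s))^2*T
        + 2*((1-a*(c/s))/4)*N)
      - (2*((1-a*(c/s))/4)*S + (a/(2*s))*D) - S := by
  have h1 : s * s⁻¹ = 1 := mul_inv_cancel₀ hs
  linear_combination (-(5*S/4)*(s*s⁻¹+1)) * h1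
    + (-S*c^2/(4*s^2) + D*c/(2*s^2) - T/(4*s^2)) * ha + (-(5*S)/(4*s^2)) * hc

private lemma quad_deriv (A B C R d Q y : ℝ) :
    HasDerivAt (fun y : ℝ => A * Real.exp (B*(y^2+R) + C*(y*d+Q)))
      (A * Real.exp (B*(y^2+R) + C*(y*d+Q)) * (2*B*y + C*d)) y := by
  have h1 : HasDerivAt (fun y : ℝ => B*(y^2+R) + C*(y*d+Q)) (2*B*y + C*d) y := by
    have h2 := ((hasDerivAt_pow 2 y).add_const R).const_mul B
    have h3 := (((hasDerivAt_id y).mul_const d).add_const Q).const_mul C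
    refine (h2.add h3).congr_deriv ?_
    push_cast; ring
  have := h1.exp.const_mul A
  refine this.congr_deriv ?_
  ring

/-- The heat kernel of the `n`-dimensional perturbed Ornstein-Uhlenbeck operator
`L⁺ = -Δ + x·∇ + |x|²` satisfies `∂ₜP = ΔP - x·∇P - |x|²P` for `t > 0`. -/
theorem stmt_18 (n : ℕ) (hn : 1 ≤ n) (x₀ : Fin n → ℝ) (P : ℝ → (Fin n → ℝ) → ℝ)
    (hP : ∀ t x, P t x =
      (Real.sqrt 5 * Real.exp t / (4 * Real.pi * Real.sinh (Real.sqrt 5 * t))) ^ ((n : ℝ) / 2)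
        * Real.exp ((1 - Real.sqrt 5 * coth (Real.sqrt 5 * t)) / 4
              * ((∑ j, x j ^ 2) + ∑ j, x₀ j ^ 2)
            + Real.sqrt 5 / (2 * Real.sinh (Real.sqrt 5 * t)) * ∑ j, x j * x₀ j)) :
    ∀ t ∈ Set.Ioi (0 : ℝ), ∀ x : Fin n → ℝ,
      deriv (fun t' => P t' x) t =
        (∑ j, deriv (deriv (fun y => P t (Function.update x j y))) (x j))
          - (∑ j, x j * deriv (fun y => P t (Function.update x j y)) (x j))
          - (∑ j, x j ^ 2) * P t x := by
  intro t ht x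
  have ht0 : 0 < t := ht
  set a : ℝ := Real.sqrt 5 with ha_def
  have ha5 : a ^ 2 = 5 := Real.sq_sqrt (by norm_num)
  have ha0 : 0 < a := Real.sqrt_pos.mpr (by norm_num)
  have hat : 0 < a * t := mul_pos ha0 ht0
  have hs0 : 0 < Real.sinh (a * t) := Real.sinh_pos_iff.mpr hat
  have hπ : (0:ℝ) < Real.pi := Real.pi_pos
  -- abbreviations (plain terms)
  have key : ∀ (t' : ℝ) (y : Fin n → ℝ), P t' y =
      (a * Real.exp t' / (4 * Real.pi * Real.sinh (a * t'))) ^ ((n : ℝ) / 2)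
        * Real.exp ((1 - a * (Real.cosh (a*t') / Real.sinh (a*t'))) / 4
              * ((∑ j, y j ^ 2) + ∑ j, x₀ j ^ 2)
            + a / (2 * Real.sinh (a * t')) * ∑ j, y j * x₀ j) := by
    intro t' y
    rw [hP]
    rfl
  set s : ℝ := Real.sinh (a * t) with hs_def
  set c : ℝ := Real.cosh (a * t) with hc_def
  have hcsq : c ^ 2 = 1 + s ^ 2 := Real.cosh_sq' _
  set S : ℝ := ∑ j, x j ^ 2 with hS_def
  set T : ℝ := ∑ j, x₀ j ^ 2 with hT_def
  set D : ℝ := ∑ j, x j * x₀ j with hD_def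
  set B : ℝ := (1 - a * (c / s)) / 4 with hB_def
  set C : ℝ := a / (2 * s) with hC_def
  set V : ℝ := (a * Real.exp t / (4 * Real.pi * s)) ^ ((n : ℝ) / 2) with hV_def
  set E : ℝ := Real.exp (B * (S + T) + C * D) with hE_def
  have hden : 4 * Real.pi * s ≠ 0 := by positivity
  have hu0 : 0 < a * Real.exp t / (4 * Real.pi * s) := by positivity
  have hPx : P t x = V * E := key t x
  -- Spatial derivatives
  have hspace : ∀ j : Fin n,
      deriv (deriv (fun y => P t (Function.update x j y))) (x j)
        = P t x * ((2*B*(x j) + C*(x₀ j))^2 + 2*B) ∧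
      deriv (fun y => P t (Function.update x j y)) (x j)
        = P t x * (2*B*(x j) + C*(x₀ j)) := by
    intro j
    have hupd1 : ∀ y : ℝ, (∑ k, (Function.update x j y) k ^ 2) = y^2 + (S - x j ^ 2) := by
      intro y
      have h1 : ∀ k, (Function.update x j y k) ^ 2
          = Function.update (fun k => x k ^ 2) j (y^2) k :=
        fun k => Function.apply_update (fun _ v => v ^ 2) x j y k
      rw [Finset.sum_congr rfl (fun k _ => h1 k),
        Finset.sum_update_of_mem (Finset.mem_univ j)]
      congr 1
      rw [Finset.sdiff_singleton_eq_erase, Finset.sum_erase_eq_sub (Finset.mem_univ j)]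
    have hupd2 : ∀ y : ℝ, (∑ k, (Function.update x j y) k * x₀ k)
        = y * x₀ j + (D - x j * x₀ j) := by
      intro y
      have h1 : ∀ k, (Function.update x j y k) * x₀ k
          = Function.update (fun k => x k * x₀ k) j (y * x₀ j) k :=
        fun k => Function.apply_update (fun k v => v * x₀ k) x j y k
      rw [Finset.sum_congr rfl (fun k _ => h1 k),
        Finset.sum_update_of_mem (Finset.mem_univ j)]
      congr 1
      rw [Finset.sdiff_singleton_eq_erase, Finset.sum_erase_eq_sub (Finset.mem_univ j)]
    have hgj : (fun y => P t (Function.update x j y))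
        = fun y => V * Real.exp (B*(y^2 + (S - x j ^ 2 + T)) + C*(y * x₀ j + (D - x j * x₀ j))) := by
      funext y
      rw [key t (Function.update x j y), hupd1 y, hupd2 y]
      congr 1
      simp only [hB_def, hC_def, hs_def, hc_def]
      ring
    set F : ℝ → ℝ := fun y =>
      V * Real.exp (B*(y^2 + (S - x j ^ 2 + T)) + C*(y * x₀ j + (D - x j * x₀ j))) with hF_def
    have hF : ∀ y, HasDerivAt F (F y * (2*B*y + C*(x₀ j))) y :=
      fun y => quad_deriv V B C (S - x j ^ 2 + T) (x₀ j) (D - x j * x₀ j) y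
    have hderivF : deriv F = fun y => F y * (2*B*y + C*(x₀ j)) :=
      funext fun y => (hF y).deriv
    have hlin : HasDerivAt (fun y : ℝ => 2*B*y + C*(x₀ j)) (2*B) (x j) := by
      simpa using ((hasDerivAt_id (x j)).const_mul (2*B)).add_const (C*(x₀ j))
    have hF2 : HasDerivAt (fun y => F y * (2*B*y + C*(x₀ j)))
        ((F (x j) * (2*B*(x j) + C*(x₀ j))) * (2*B*(x j) + C*(x₀ j)) + F (x j) * (2*B))
        (x j) := (hF (x j)).mul hlin
    have hFx : F (x j) = P t x := by
      have := congrFun hgj (x j)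
      rw [Function.update_eq_self] at this
      exact this.symm
    constructor
    · rw [hgj, hderivF, hF2.deriv, hFx]
      ring
    · rw [hgj, (hF (x j)).deriv, hFx]
  -- Time derivative
  have hat' : HasDerivAt (fun t' : ℝ => a * t') a t := by
    simpa using (hasDerivAt_id t).const_mul a
  have hsinh : HasDerivAt (fun t' => Real.sinh (a * t')) (c * a) t := hat'.sinh
  have hcosh : HasDerivAt (fun t' => Real.cosh (a * t')) (s * a) t := hat'.cosh
  have hnum : HasDerivAt (fun t' => a * Real.exp t') (a * Real.exp t) t :=
    (Real.hasDerivAt_exp t).const_mul a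
  have hdenD : HasDerivAt (fun t' => 4 * Real.pi * Real.sinh (a * t'))
      (4 * Real.pi * (c * a)) t := hsinh.const_mul _
  have hu : HasDerivAt (fun t' => a * Real.exp t' / (4 * Real.pi * Real.sinh (a * t')))
      ((a * Real.exp t * (4 * Real.pi * s) - a * Real.exp t * (4 * Real.pi * (c * a)))
        / (4 * Real.pi * s) ^ 2) t := hnum.div hdenD hden
  have hV' : HasDerivAt
      (fun t' => (a * Real.exp t' / (4 * Real.pi * Real.sinh (a * t'))) ^ ((n : ℝ) / 2))
      (((a * Real.exp t * (4 * Real.pi * s) - a * Real.exp t * (4 * Real.pi * (c * a)))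
          / (4 * Real.pi * s) ^ 2) * ((n : ℝ) / 2)
        * (a * Real.exp t / (4 * Real.pi * s)) ^ ((n : ℝ) / 2 - 1)) t :=
    hu.rpow_const (Or.inl hu0.ne')
  have hVval : ((a * Real.exp t * (4 * Real.pi * s) - a * Real.exp t * (4 * Real.pi * (c * a)))
          / (4 * Real.pi * s) ^ 2) * ((n : ℝ) / 2)
        * (a * Real.exp t / (4 * Real.pi * s)) ^ ((n : ℝ) / 2 - 1)
      = V * ((n : ℝ) / 2 * (1 - a * (c / s))) := by
    have hsplit : (a * Real.exp t * (4 * Real.pi * s) - a * Real.exp t * (4 * Real.pi * (c * a)))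
          / (4 * Real.pi * s) ^ 2
        = (a * Real.exp t / (4 * Real.pi * s)) * (1 - a * (c / s)) := by
      field_simp
    rw [hsplit, hV_def]
    have hpow : (a * Real.exp t / (4 * Real.pi * s)) ^ ((n : ℝ) / 2 - 1)
          * (a * Real.exp t / (4 * Real.pi * s))
        = (a * Real.exp t / (4 * Real.pi * s)) ^ ((n : ℝ) / 2) := by
      rw [Real.rpow_sub_one hu0.ne', div_mul_cancel₀ _ hu0.ne']
    calc (a * Real.exp t / (4 * Real.pi * s)) * (1 - a * (c / s)) * ((n : ℝ) / 2)
          * (a * Real.exp t / (4 * Real.pi * s)) ^ ((n : ℝ) / 2 - 1)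
        = ((a * Real.exp t / (4 * Real.pi * s)) ^ ((n : ℝ) / 2 - 1)
            * (a * Real.exp t / (4 * Real.pi * s))) * ((1 - a * (c / s)) * ((n : ℝ) / 2)) := by
          ring
      _ = (a * Real.exp t / (4 * Real.pi * s)) ^ ((n : ℝ) / 2)
            * ((n : ℝ) / 2 * (1 - a * (c / s))) := by rw [hpow]; ring
  have hq : HasDerivAt (fun t' => Real.cosh (a*t') / Real.sinh (a*t'))
      ((s * a * s - c * (c * a)) / s ^ 2) t := hcosh.div hsinh hs0.ne'
  have hBd : HasDerivAt (fun t' => (1 - a * (Real.cosh (a*t') / Real.sinh (a*t'))) / 4)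
      ((-(a * ((s * a * s - c * (c * a)) / s ^ 2))) / 4) t :=
    ((hq.const_mul a).const_sub 1).div_const 4
  have hBdval : (-(a * ((s * a * s - c * (c * a)) / s ^ 2))) / 4 = 5 / (4 * s^2) := by
    have h1 : c ^ 2 = 1 + s ^ 2 := hcsq
    field_simp
    linear_combination (c^2-s^2)*ha5 + 5*h1
  have hCden : HasDerivAt (fun t' => 2 * Real.sinh (a * t')) (2 * (c * a)) t :=
    hsinh.const_mul 2
  have hCd : HasDerivAt (fun t' => a / (2 * Real.sinh (a * t')))
      ((0 * (2 * s) - a * (2 * (c * a))) / (2 * s) ^ 2) t :=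
    (hasDerivAt_const t a).div hCden (by positivity)
  have hCdval : (0 * (2 * s) - a * (2 * (c * a))) / (2 * s) ^ 2 = -(5*c) / (2 * s^2) := by
    field_simp
    linear_combination (-c)*ha5
  have hw : HasDerivAt (fun t' =>
      (1 - a * (Real.cosh (a*t') / Real.sinh (a*t'))) / 4 * (S + T)
        + a / (2 * Real.sinh (a * t')) * D)
      (5 / (4 * s^2) * (S + T) + (-(5*c) / (2 * s^2)) * D) t := by
    have := (hBd.mul_const (S + T)).add (hCd.mul_const D)
    rw [hBdval, hCdval] at this
    exact this
  have hPfun : (fun t' => P t' x) = fun t' =>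
      (a * Real.exp t' / (4 * Real.pi * Real.sinh (a * t'))) ^ ((n : ℝ) / 2)
        * Real.exp ((1 - a * (Real.cosh (a*t') / Real.sinh (a*t'))) / 4 * (S + T)
            + a / (2 * Real.sinh (a * t')) * D) :=
    funext fun t' => key t' x
  have htime : HasDerivAt (fun t' => P t' x)
      (V * ((n : ℝ) / 2 * (1 - a * (c / s))) * E
        + V * (E * (5 / (4 * s^2) * (S + T) + (-(5*c) / (2 * s^2)) * D))) t := by
    rw [hPfun]
    have := hV'.mul hw.exp
    rw [hVval] at this
    exact this
  rw [htime.deriv]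
  -- rewrite spatial sums
  have hsum1 : (∑ j, deriv (deriv (fun y => P t (Function.update x j y))) (x j))
      = P t x * (4*B^2*S + 4*B*C*D + C^2*T + 2*B*n) := by
    rw [Finset.sum_congr rfl (fun j _ => (hspace j).1)]
    rw [← Finset.mul_sum]
    congr 1
    have h1 : ∀ j : Fin n, (2*B*(x j) + C*(x₀ j))^2 + 2*B
        = 4*B^2*(x j ^ 2) + 4*B*C*(x j * x₀ j) + C^2*(x₀ j ^ 2) + 2*B := fun j => by ring
    rw [Finset.sum_congr rfl (fun j _ => h1 j)]
    rw [Finset.sum_add_distrib, Finset.sum_add_distrib, Finset.sum_add_distrib,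
      ← Finset.mul_sum, ← Finset.mul_sum, ← Finset.mul_sum, Finset.sum_const,
      Finset.card_univ, Fintype.card_fin, nsmul_eq_mul]
    rw [← hS_def, ← hD_def, ← hT_def]
    ring
  have hsum2 : (∑ j, x j * deriv (fun y => P t (Function.update x j y)) (x j))
      = P t x * (2*B*S + C*D) := by
    rw [Finset.sum_congr rfl (fun j _ => by rw [(hspace j).2])]
    have h1 : ∀ j : Fin n, x j * (P t x * (2*B*(x j) + C*(x₀ j)))
        = P t x * (2*B*(x j ^ 2)) + P t x * (C*(x j * x₀ j)) := fun j => by ring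
    rw [Finset.sum_congr rfl (fun j _ => h1 j), Finset.sum_add_distrib]
    simp only [← Finset.mul_sum]
    rw [← hS_def, ← hD_def]
    ring
  rw [hsum1, hsum2, hPx]
  have hcore := core_identity a s c S T D (n : ℝ) hs0.ne' ha5 hcsq
  rw [← hB_def, ← hC_def] at hcore
  linear_combination (V * E) * hcore
end

section
/- Let n ≥ 1 and x₀ ∈ ℝⁿ. Define, for t ∈ (0, π/√3) and x ∈ ℝⁿ, P(t, x) = (√3·e^t / (4π·sin(√3·t)))^{n/2} · exp{((1 - √3·cot(√3·t))/4)·(|x|² + |x₀|²) + (√3/(2·sin(√3·t)))·(x·x₀)}, where x·x₀ is the Euclidean inner product and |·| the Euclidean norm. Then P satisfies ∂ₜP(t,x) = ΔP(t,x) - x·∇P(t,x) + |x|²·P(t,x) for all t ∈ (0, π/√3) and x ∈ ℝⁿ, where Δ and ∇ act in the variable x. -/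
open Real Finset in
lemma gauss_hasDerivAt (K b c d y : ℝ) :
    HasDerivAt (fun z : ℝ => K * Real.exp (b*z^2 + c*z + d))
      ((2*b*y + c) * (K * Real.exp (b*y^2 + c*y + d))) y := by
  have hp : HasDerivAt (fun z : ℝ => z^2) (2*y) y := by
    simpa using hasDerivAt_pow 2 y
  have h1 : HasDerivAt (fun z : ℝ => b*z^2 + c*z + d) (2*b*y + c) y := by
    have := ((hp.const_mul b).add ((hasDerivAt_id y).const_mul c)).add_const d
    exact this.congr_deriv (by ring)
  have := (h1.exp).const_mul K
  exact this.congr_deriv (by ring)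

/-- The heat kernel of the `n`-dimensional perturbed Ornstein-Uhlenbeck operator
`L⁻ = -Δ + x·∇ - |x|²` satisfies `∂ₜP = ΔP - x·∇P + |x|²P` on `(0, π/√3)`. -/
theorem stmt_19 (n : ℕ) (hn : 1 ≤ n) (x₀ : Fin n → ℝ) (P : ℝ → (Fin n → ℝ) → ℝ)
    (hP : ∀ t x, P t x =
      (Real.sqrt 3 * Real.exp t / (4 * Real.pi * Real.sin (Real.sqrt 3 * t))) ^ ((n : ℝ) / 2)
        * Real.exp ((1 - Real.sqrt 3 * Real.cot (Real.sqrt 3 * t)) / 4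
              * ((∑ j, x j ^ 2) + ∑ j, x₀ j ^ 2)
            + Real.sqrt 3 / (2 * Real.sin (Real.sqrt 3 * t)) * ∑ j, x j * x₀ j)) :
    ∀ t ∈ Set.Ioo (0 : ℝ) (Real.pi / Real.sqrt 3), ∀ x : Fin n → ℝ,
      deriv (fun t' => P t' x) t =
        (∑ j, deriv (deriv (fun y => P t (Function.update x j y))) (x j))
          - (∑ j, x j * deriv (fun y => P t (Function.update x j y)) (x j))
          + (∑ j, x j ^ 2) * P t x := by
  intro t ht x
  obtain ⟨ht0, htpi⟩ := ht
  simp only [hP]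
  set s : ℝ := Real.sqrt 3 with hs_def
  have hs3 : s ^ 2 = 3 := Real.sq_sqrt (by norm_num)
  have hs0 : (0:ℝ) < s := Real.sqrt_pos.mpr (by norm_num)
  have hstpi : s * t < Real.pi := by
    rw [lt_div_iff₀ hs0] at htpi; linarith
  have hpi : (0:ℝ) < Real.pi := Real.pi_pos
  set si : ℝ := Real.sin (s * t) with hsi_def
  set co : ℝ := Real.cos (s * t) with hco_def
  have hsin : 0 < si := Real.sin_pos_of_pos_of_lt_pi (mul_pos hs0 ht0) hstpi
  have hpyth : si ^ 2 + co ^ 2 = 1 := Real.sin_sq_add_cos_sq _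
  set A : ℝ := s * Real.exp t / (4 * Real.pi * si) with hA_def
  have hA0 : 0 < A := by
    rw [hA_def]; positivity
  set F : ℝ := A ^ ((n:ℝ)/2) with hF_def
  set B : ℝ := (1 - s * Real.cot (s * t)) / 4 with hB_def
  set C : ℝ := s / (2 * si) with hC_def
  have hBcs : B = (1 - s * (co / si)) / 4 := by
    rw [hB_def, Real.cot_eq_cos_div_sin]
  set Sx : ℝ := ∑ j, x j ^ 2 with hSx_def
  set S0 : ℝ := ∑ j, x₀ j ^ 2 with hS0_def
  set I : ℝ := ∑ j, x j * x₀ j with hI_def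
  -- split sums over update
  have hsq : ∀ (j : Fin n) (y : ℝ),
      (∑ i, Function.update x j y i ^ 2) = y ^ 2 + ∑ i ∈ Finset.univ.erase j, x i ^ 2 := by
    intro j y
    rw [← Finset.add_sum_erase _ _ (Finset.mem_univ j), Function.update_self]
    exact congrArg _ (Finset.sum_congr rfl fun i hi => by
      rw [Function.update_of_ne (Finset.mem_erase.mp hi).1])
  have hprod : ∀ (j : Fin n) (y : ℝ),
      (∑ i, Function.update x j y i * x₀ i)
        = y * x₀ j + ∑ i ∈ Finset.univ.erase j, x i * x₀ i := by
    intro j y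
    rw [← Finset.add_sum_erase _ _ (Finset.mem_univ j), Function.update_self]
    exact congrArg _ (Finset.sum_congr rfl fun i hi => by
      rw [Function.update_of_ne (Finset.mem_erase.mp hi).1])
  set R : Fin n → ℝ := fun j => ∑ i ∈ Finset.univ.erase j, x i ^ 2 with hR_def
  set T : Fin n → ℝ := fun j => ∑ i ∈ Finset.univ.erase j, x i * x₀ i with hT_def
  have hSxj : ∀ j : Fin n, Sx = x j ^ 2 + R j := by
    intro j
    have := hsq j (x j); rw [Function.update_eq_self] at this
    exact this
  have hIj : ∀ j : Fin n, I = x j * x₀ j + T j := by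
    intro j
    have := hprod j (x j); rw [Function.update_eq_self] at this
    exact this
  have hg : ∀ j : Fin n,
      (fun y => F * Real.exp (B * ((∑ i, Function.update x j y i ^ 2) + S0)
          + C * ∑ i, Function.update x j y i * x₀ i))
        = fun y => F * Real.exp (B * y ^ 2 + (C * x₀ j) * y + (B * (R j + S0) + C * T j)) := by
    intro j
    funext y
    rw [hsq j y, hprod j y]
    congr 1
    simp only [hR_def, hT_def]; ring
  have hexpQ : ∀ j : Fin n,
      F * Real.exp (B * x j ^ 2 + (C * x₀ j) * x j + (B * (R j + S0) + C * T j))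
        = F * Real.exp (B * (Sx + S0) + C * I) := by
    intro j
    congr 1
    rw [hSxj j, hIj j]
    ring
  set Q : ℝ := F * Real.exp (B * (Sx + S0) + C * I) with hQ_def
  have hD1 : ∀ j : Fin n,
      deriv (fun y => F * Real.exp (B * ((∑ i, Function.update x j y i ^ 2) + S0)
          + C * ∑ i, Function.update x j y i * x₀ i)) (x j)
        = (2 * B * x j + C * x₀ j) * Q := by
    intro j
    rw [hg j, (gauss_hasDerivAt F B (C * x₀ j) (B * (R j + S0) + C * T j) (x j)).deriv, hexpQ j]
  have hDD : ∀ j : Fin n,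
      deriv (deriv (fun y => F * Real.exp (B * ((∑ i, Function.update x j y i ^ 2) + S0)
          + C * ∑ i, Function.update x j y i * x₀ i))) (x j)
        = ((2 * B * x j + C * x₀ j) ^ 2 + 2 * B) * Q := by
    intro j
    rw [hg j]
    have hderiv1 : deriv (fun y => F * Real.exp (B * y ^ 2 + (C * x₀ j) * y
          + (B * (R j + S0) + C * T j)))
        = fun y => (2 * B * y + C * x₀ j) * (F * Real.exp (B * y ^ 2 + (C * x₀ j) * y
          + (B * (R j + S0) + C * T j))) :=
      funext fun y => (gauss_hasDerivAt F B (C * x₀ j) (B * (R j + S0) + C * T j) y).deriv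
    rw [hderiv1]
    have hlin2 : HasDerivAt (fun y : ℝ => 2 * B * y + C * x₀ j) (2 * B) (x j) := by
      simpa using ((hasDerivAt_id (x j)).const_mul (2 * B)).add_const (C * x₀ j)
    have h2 := hlin2.mul (gauss_hasDerivAt F B (C * x₀ j) (B * (R j + S0) + C * T j) (x j))
    erw [h2.deriv]; rw [hexpQ j]
    ring
  -- time derivatives
  have hlin : HasDerivAt (fun u : ℝ => s * u) s t := by
    simpa using (hasDerivAt_id t).const_mul s
  have hsin' : HasDerivAt (fun u => Real.sin (s * u)) (co * s) t :=
    (Real.hasDerivAt_sin (s * t)).comp t hlin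
  have hcos' : HasDerivAt (fun u => Real.cos (s * u)) (-si * s) t := by
    exact ((Real.hasDerivAt_cos (s * t)).comp t hlin).congr_deriv (by ring)
  have hsine : Real.sin (s * t) ≠ 0 := by rw [← hsi_def]; exact hsin.ne'
  have hA' : HasDerivAt (fun u => s * Real.exp u / (4 * Real.pi * Real.sin (s * u)))
      (A * (1 - s * (co / si))) t := by
    have hnum : HasDerivAt (fun u => s * Real.exp u) (s * Real.exp t) t :=
      (Real.hasDerivAt_exp t).const_mul s
    have hden : HasDerivAt (fun u => 4 * Real.pi * Real.sin (s * u))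
        (4 * Real.pi * (co * s)) t := hsin'.const_mul _
    have h := hnum.div hden (by rw [← hsi_def]; positivity)
    refine h.congr_deriv (Eq.symm ?_)
    rw [← hsi_def, hA_def]
    field_simp
  have hF' : HasDerivAt
      (fun u => (s * Real.exp u / (4 * Real.pi * Real.sin (s * u))) ^ ((n:ℝ)/2))
      (((n:ℝ)/2) * (1 - s * (co / si)) * F) t := by
    have h := hA'.rpow_const (p := (n:ℝ)/2) (Or.inl hA0.ne')
    refine h.congr_deriv (Eq.symm ?_)
    rw [← hsi_def, ← hA_def, Real.rpow_sub_one hA0.ne', hF_def]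
    field_simp
  have hcot' : HasDerivAt (fun u => Real.cot (s * u)) (-s / si ^ 2) t := by
    have hfun : (fun u => Real.cot (s * u)) = fun u => Real.cos (s * u) / Real.sin (s * u) :=
      funext fun u => Real.cot_eq_cos_div_sin _
    rw [hfun]
    have h := hcos'.div hsin' hsine
    refine h.congr_deriv (Eq.symm ?_)
    rw [← hsi_def]
    field_simp
    linear_combination hpyth
  have hB' : HasDerivAt (fun u => (1 - s * Real.cot (s * u)) / 4) (3 / (4 * si ^ 2)) t := by
    have h := ((hcot'.const_mul s).const_sub 1).div_const 4
    refine h.congr_deriv (Eq.symm ?_)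
    field_simp
    linear_combination (-1) * hs3
  have hC' : HasDerivAt (fun u => s / (2 * Real.sin (s * u))) (-3 * co / (2 * si ^ 2)) t := by
    have h := (hasDerivAt_const t s).div (hsin'.const_mul 2) (by rw [← hsi_def]; positivity)
    refine h.congr_deriv (Eq.symm ?_)
    rw [← hsi_def]
    field_simp
    linear_combination co * hs3
  have hE : HasDerivAt (fun u => (1 - s * Real.cot (s * u)) / 4 * (Sx + S0)
      + s / (2 * Real.sin (s * u)) * I)
      (3 / (4 * si ^ 2) * (Sx + S0) + (-3 * co / (2 * si ^ 2)) * I) t :=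
    (hB'.mul_const _).add (hC'.mul_const _)
  have hG : HasDerivAt
      (fun t' => (s * Real.exp t' / (4 * Real.pi * Real.sin (s * t'))) ^ ((n:ℝ)/2)
        * Real.exp ((1 - s * Real.cot (s * t')) / 4 * (Sx + S0)
            + s / (2 * Real.sin (s * t')) * I))
      ((((n:ℝ)/2) * (1 - s * (co / si)) * F) * Real.exp (B * (Sx + S0) + C * I)
        + F * (Real.exp (B * (Sx + S0) + C * I)
            * (3 / (4 * si ^ 2) * (Sx + S0) + (-3 * co / (2 * si ^ 2)) * I))) t :=
    hF'.mul hE.exp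
  rw [hG.deriv]
  -- rewrite spatial sums
  have h1 : (∑ j : Fin n, deriv (deriv (fun y =>
        F * Real.exp (B * ((∑ i, Function.update x j y i ^ 2) + S0)
          + C * ∑ i, Function.update x j y i * x₀ i))) (x j))
      = (4 * B ^ 2 * Sx + 4 * B * C * I + C ^ 2 * S0 + 2 * (n:ℝ) * B) * Q := by
    rw [Finset.sum_congr rfl fun j _ => hDD j, ← Finset.sum_mul]
    congr 1
    have e1 : ∀ j : Fin n, (2 * B * x j + C * x₀ j) ^ 2 + 2 * B
        = 4 * B ^ 2 * x j ^ 2 + 4 * (B * C) * (x j * x₀ j) + C ^ 2 * x₀ j ^ 2 + 2 * B :=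
      fun j => by ring
    rw [Finset.sum_congr rfl fun j _ => e1 j, Finset.sum_add_distrib, Finset.sum_add_distrib,
      Finset.sum_add_distrib, ← Finset.mul_sum, ← Finset.mul_sum, ← Finset.mul_sum,
      ← hSx_def, ← hI_def, ← hS0_def, Finset.sum_const, Finset.card_univ, Fintype.card_fin,
      nsmul_eq_mul]
    ring
  have h2 : (∑ j : Fin n, x j * deriv (fun y =>
        F * Real.exp (B * ((∑ i, Function.update x j y i ^ 2) + S0)
          + C * ∑ i, Function.update x j y i * x₀ i)) (x j))
      = (2 * B * Sx + C * I) * Q := by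
    have e2 : ∀ j : Fin n, x j * ((2 * B * x j + C * x₀ j) * Q)
        = (2 * B * x j ^ 2 + C * (x j * x₀ j)) * Q := fun j => by ring
    rw [Finset.sum_congr rfl fun j _ => by rw [hD1 j, e2 j], ← Finset.sum_mul]
    congr 1
    rw [Finset.sum_add_distrib, ← Finset.mul_sum, ← Finset.mul_sum, ← hSx_def, ← hI_def]
  rw [h1, h2]
  -- scalar identities
  have hsi := hsin.ne'
  have id1 : 4 * B ^ 2 - 2 * B + 1 = 3 / (4 * si ^ 2) := by
    rw [hBcs]
    field_simp
    linear_combination co ^ 2 * hs3 + 3 * hpyth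
  have id2 : C ^ 2 = 3 / (4 * si ^ 2) := by
    rw [hC_def]
    field_simp
    linear_combination 4 * hs3
  have id3 : 4 * B * C - C = -3 * co / (2 * si ^ 2) := by
    rw [hBcs, hC_def]
    field_simp
    linear_combination (-co) * hs3
  have id4 : 2 * (n:ℝ) * B = (n:ℝ)/2 * (1 - s * (co / si)) := by
    rw [hBcs]; ring
  have key : (n:ℝ)/2 * (1 - s * (co / si))
        + (3 / (4 * si ^ 2) * (Sx + S0) + (-3 * co / (2 * si ^ 2)) * I)
      = (4 * B ^ 2 * Sx + 4 * B * C * I + C ^ 2 * S0 + 2 * (n:ℝ) * B)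
        - (2 * B * Sx + C * I) + Sx := by
    linear_combination (-Sx) * id1 - S0 * id2 - I * id3 - id4
  rw [hQ_def]
  linear_combination (F * Real.exp (B * (Sx + S0) + C * I)) * key
end
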